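/- First derivative of the mi-score change: for every c ∈ (l_s, u_s), the function δ_mi has derivative at c equal to o_+ / (n(u_s − c)) − o_− / (n(c − l_s)). -/

import Mathlib

/-- The mi score of a bin with observed count `o` and expected count `e`,
for total sample size `n`: `mi(o, e) = (o/n)·log(o/e)`.  The convention
`0·log 0 = 0` holds automatically since `Real.log 0 = 0`. -/
noncomputable def miScore (n o e : ℝ) : ℝ := (o / n) * Real.log (o / e)

/-- The change in total mi score due to a vertical split of the bin
`(ls, us] × (lt, ut]` at coordinate `c`, with fixed observed counts `op`
above and `om` below the split, and total sample size `n`. -/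
noncomputable def deltaMi (ls us lt ut n op om : ℝ) (c : ℝ) : ℝ :=
  miScore n op ((us - c) * (ut - lt) / n) +
  miScore n om ((c - ls) * (ut - lt) / n) -
  miScore n (op + om) ((us - ls) * (ut - lt) / n)

private lemma aux_upper (n o K us : ℝ) (hn : 0 < n) (ho : 0 ≤ o) (hK : 0 < K)
    (c : ℝ) (hc : c < us) :
    HasDerivAt (fun x => miScore n o ((us - x) * K / n)) (o / (n * (us - c))) c := by
  rcases eq_or_lt_of_le ho with h0 | h0
  · simp only [miScore, ← h0, zero_div, zero_mul]
    simpa using (hasDerivAt_const c (0 : ℝ))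
  · have hKn : (0:ℝ) < K / n := by positivity
    have key : ∀ x ∈ Set.Iio us,
        miScore n o ((us - x) * K / n)
          = (o / n) * (Real.log o - Real.log (us - x) - Real.log (K / n)) := by
      intro x hx
      have hux : (0:ℝ) < us - x := sub_pos.2 hx
      unfold miScore
      have h1 : (us - x) * K / n = (us - x) * (K / n) := by ring
      rw [h1, Real.log_div h0.ne' (by positivity),
        Real.log_mul hux.ne' hKn.ne']
      ring
    have huc : (0:ℝ) < us - c := sub_pos.2 hc
    have hd : HasDerivAt (fun x => (o / n) *
        (Real.log o - Real.log (us - x) - Real.log (K / n)))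
        (o / (n * (us - c))) c := by
      have hlog : HasDerivAt (fun x => Real.log (us - x)) (-1 / (us - c)) c := by
        have h2 : HasDerivAt (fun x : ℝ => us - x) (-1) c := by
          exact (hasDerivAt_id c).const_sub us
        exact h2.log huc.ne'
      have := (((hasDerivAt_const c (Real.log o)).sub hlog).sub
        (hasDerivAt_const c (Real.log (K / n)))).const_mul (o / n)
      refine this.congr_deriv ?_
      field_simp
      ring
    refine hd.congr_of_eventuallyEq ?_
    filter_upwards [Iio_mem_nhds hc] with x hx using key x hx
  
private lemma aux_lower (n o K ls : ℝ) (hn : 0 < n) (ho : 0 ≤ o) (hK : 0 < K)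
    (c : ℝ) (hc : ls < c) :
    HasDerivAt (fun x => miScore n o ((x - ls) * K / n)) (-(o / (n * (c - ls)))) c := by
  have h := aux_upper n o K (-ls) hn ho hK (-c) (by linarith)
  have h2 := h.comp c (hasDerivAt_neg c)
  have h4 : ((fun x => miScore n o ((-ls - x) * K / n)) ∘ Neg.neg)
      = fun x => miScore n o ((x - ls) * K / n) := by
    funext x; simp only [Function.comp_apply]; congr 2; ring
  rw [h4] at h2
  refine h2.congr_deriv ?_
  rw [mul_neg_one]
  congr 2
  ring

theorem deltaMi_hasDerivAt (ls us lt ut n op om : ℝ)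
    (hlu : ls < us) (hlt : lt < ut) (hn : 0 < n)
    (hop : 0 ≤ op) (hom : 0 ≤ om) :
    ∀ c ∈ Set.Ioo ls us,
      HasDerivAt (deltaMi ls us lt ut n op om)
        (op / (n * (us - c)) - om / (n * (c - ls))) c := by
  intro c hc
  have h1 := aux_upper n op (ut - lt) us hn hop (sub_pos.2 hlt) c hc.2
  have h2 := aux_lower n om (ut - lt) ls hn hom (sub_pos.2 hlt) c hc.1
  have h3 := hasDerivAt_const (𝕜 := ℝ) c (miScore n (op + om) ((us - ls) * (ut - lt) / n))
  have := (h1.add h2).sub h3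
  exact this.congr_deriv (by ring)
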